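/- Let p be an odd prime. Define the total Steenrod operation on F_p[y_1,...,y_n] as the F_p-algebra homomorphism P_t: F_p[y_1,...,y_n] → F_p[y_1,...,y_n][t] with P_t(y_i) = y_i + y_i^p t, and write P^r for the coefficient of t^r (suitably graded so that P^r raises degree by 2r(p−1) when dim y_i = 2). Then for a sequence (e_1,...,e_n) of pairwise distinct nonnegative integers and r ≥ 0: P^r[e_1,...,e_n] = [e_1+ε_1, ..., e_n+ε_n] if r = Σ_j ε_j p^{e_j} for some ε_j ∈ {0,1} (such a representation being unique), and P^r[e_1,...,e_n] = 0 if r admits no such representation. -/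

import Mathlib

open MvPolynomial Finset

/-- `br p e = det (y_i ^ (p ^ e_j))` in `F_p[y_1,…,y_n]`. -/
noncomputable def br (p : ℕ) {n : ℕ} (e : Fin n → ℕ) : MvPolynomial (Fin n) (ZMod p) :=
  Matrix.det (Matrix.of fun i j : Fin n => (X i : MvPolynomial (Fin n) (ZMod p)) ^ p ^ e j)

/-- `L_n = [0,1,…,n-1]`. -/
noncomputable def Lpoly (p n : ℕ) : MvPolynomial (Fin n) (ZMod p) :=
  br p (fun j : Fin n => (j : ℕ))

/-- `L_{n,s} = [0,…,ŝ,…,n]`. -/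
noncomputable def Ls (p n s : ℕ) : MvPolynomial (Fin n) (ZMod p) :=
  br p (fun j : Fin n => if (j : ℕ) < s then (j : ℕ) else (j : ℕ) + 1)

/-- The total Steenrod operation `P_t`: the `F_p`-algebra homomorphism with
`P_t(y_i) = y_i + y_i^p t`.  The Steenrod operation `P^r` is the coefficient of `t^r`. -/
noncomputable def Pt (p n : ℕ) :
    MvPolynomial (Fin n) (ZMod p) →ₐ[ZMod p]
      Polynomial (MvPolynomial (Fin n) (ZMod p)) :=
  aeval (fun i : Fin n =>
    Polynomial.C (X i) + Polynomial.C ((X i : MvPolynomial (Fin n) (ZMod p)) ^ p) * Polynomial.X)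

/-- Distinct subsets of powers of `p` have distinct sums. -/
lemma sum_pow_injective {p : ℕ} (hp : 2 ≤ p) :
    Function.Injective fun S : Finset ℕ => ∑ k ∈ S, p ^ k := by
  have key : ∀ N, ∀ S T : Finset ℕ, (∑ k ∈ S, p ^ k) = N → (∑ k ∈ T, p ^ k) = N → S = T := by
    intro N
    induction N using Nat.strong_induction_on with
    | _ N ih =>
      intro S T hS hT
      rcases Nat.eq_zero_or_pos N with h0 | hpos
      · subst h0
        have h1 : ∀ U : Finset ℕ, (∑ k ∈ U, p ^ k) = 0 → U = ∅ := by
          intro U hU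
          by_contra h
          obtain ⟨x, hx⟩ := Finset.nonempty_iff_ne_empty.2 h
          have : 0 < ∑ k ∈ U, p ^ k :=
            Finset.sum_pos' (fun _ _ => Nat.zero_le _) ⟨x, hx, pow_pos (by omega) _⟩
          omega
        rw [h1 S hS, h1 T hT]
      · have hmod : ∀ U : Finset ℕ, (∑ k ∈ U, p ^ k) % p = if 0 ∈ U then 1 else 0 := by
          intro U
          rw [Finset.sum_nat_mod]
          have h1 : ∀ k ∈ U, p ^ k % p = if k = 0 then 1 else 0 := by
            intro k _
            rcases Nat.eq_zero_or_pos k with rfl | hk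
            · simp [Nat.mod_eq_of_lt (by omega : 1 < p)]
            · rw [if_neg (by omega)]
              exact Nat.mod_eq_zero_of_dvd (dvd_pow_self p hk.ne')
          rw [Finset.sum_congr rfl h1]
          rw [Finset.sum_ite_eq' U 0 (fun _ => 1)]
          split <;> simp [Nat.mod_eq_of_lt (by omega : 1 < p)]
        have hstep : ∀ U : Finset ℕ,
            p * (∑ k ∈ (U.erase 0).image (· - 1), p ^ k) + (if 0 ∈ U then 1 else 0)
              = ∑ k ∈ U, p ^ k := by
          intro U
          rw [Finset.sum_image (by
            intro a ha b hb hab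
            have ha' := Finset.mem_erase.1 ha
            have hb' := Finset.mem_erase.1 hb
            have hab' : a - 1 = b - 1 := hab
            omega)]
          rw [Finset.mul_sum]
          have hc : ∀ k ∈ U.erase 0, p * p ^ (k - 1) = p ^ k := by
            intro k hk
            have hk1 : 1 ≤ k := by have := Finset.mem_erase.1 hk; omega
            rw [← pow_succ']
            congr 1; omega
          rw [Finset.sum_congr rfl hc]
          by_cases h0 : 0 ∈ U
          · rw [if_pos h0]
            have := Finset.sum_erase_add U (fun k => p ^ k) h0
            simpa using this
          · rw [if_neg h0, Finset.erase_eq_of_notMem h0, add_zero]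
        have hbS := hmod S
        have hbT := hmod T
        rw [hS] at hbS; rw [hT] at hbT
        have hMS := hstep S
        have hMT := hstep T
        rw [hS] at hMS; rw [hT] at hMT
        set MS := ∑ k ∈ (S.erase 0).image (· - 1), p ^ k with hMSdef
        set MT := ∑ k ∈ (T.erase 0).image (· - 1), p ^ k with hMTdef
        have hMeq : MS = MT := by
          have h2 : p * MS = p * MT := by omega
          exact Nat.eq_of_mul_eq_mul_left (by omega) h2
        have hMSlt : MS < N := by
          have h2 : 2 * MS ≤ p * MS := Nat.mul_le_mul_right MS hp
          omega
        have hST' : (S.erase 0).image (· - 1) = (T.erase 0).image (· - 1) :=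
          ih MS hMSlt _ _ rfl (by rw [← hMTdef, ← hMeq])
        have hrec : ∀ (U : Finset ℕ) (x : ℕ),
            x + 1 ∈ U ↔ x ∈ (U.erase 0).image (· - 1) := by
          intro U x
          simp only [Finset.mem_image, Finset.mem_erase]
          constructor
          · intro h; exact ⟨x + 1, ⟨by omega, h⟩, by omega⟩
          · rintro ⟨y, ⟨hy0, hyU⟩, rfl⟩
            have hy : y - 1 + 1 = y := by omega
            rwa [hy]
        ext x
        cases x with
        | zero =>
          by_cases h1 : 0 ∈ S <;> by_cases h2 : 0 ∈ T <;> simp_all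
        | succ k =>
          rw [hrec S, hrec T, hST']
  intro S T h
  exact key _ S T h rfl

lemma Pt_X_pow (p n : ℕ) [Fact p.Prime] (i : Fin n) (k : ℕ) :
    Pt p n ((X i : MvPolynomial (Fin n) (ZMod p)) ^ p ^ k) =
      Polynomial.C ((X i : MvPolynomial (Fin n) (ZMod p)) ^ p ^ k) +
        Polynomial.C ((X i : MvPolynomial (Fin n) (ZMod p)) ^ p ^ (k + 1)) *
          Polynomial.X ^ p ^ k := by
  rw [map_pow, Pt, aeval_X, add_pow_char_pow, ← Polynomial.C_pow, mul_pow, ← Polynomial.C_pow,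
    ← pow_mul, ← pow_succ']

/-- Expansion of the total Steenrod operation on `br p e`. -/
lemma Pt_br (p : ℕ) [Fact p.Prime] {n : ℕ} (e : Fin n → ℕ) :
    Pt p n (br p e) = ∑ ε : Fin n → Bool,
      Polynomial.monomial (∑ j, if ε j then p ^ e j else 0)
        (br p fun j => e j + if ε j then 1 else 0) := by
  classical
  set g : Fin n → Bool → (Fin n → Polynomial (MvPolynomial (Fin n) (ZMod p))) :=
    fun j b i =>
      if b then Polynomial.C ((X i : MvPolynomial (Fin n) (ZMod p)) ^ p ^ (e j + 1)) *
          Polynomial.X ^ p ^ e j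
      else Polynomial.C ((X i : MvPolynomial (Fin n) (ZMod p)) ^ p ^ e j) with hg
  have step1 : Pt p n (br p e) =
      (Matrix.detRowAlternating :
        (Fin n → Polynomial (MvPolynomial (Fin n) (ZMod p)))
          [⋀^Fin n]→ₗ[Polynomial (MvPolynomial (Fin n) (ZMod p))]
          Polynomial (MvPolynomial (Fin n) (ZMod p))).toMultilinearMap
        (fun j => ∑ b : Bool, g j b) := by
    rw [br, AlgHom.map_det, ← Matrix.det_transpose]
    congr 1
    funext j i
    show Pt p n ((X i : MvPolynomial (Fin n) (ZMod p)) ^ p ^ e j) = _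
    rw [Pt_X_pow]
    simp only [Fintype.sum_bool, hg]
    simp [add_comm]
  rw [step1, MultilinearMap.map_sum]
  apply Finset.sum_congr rfl
  intro ε _
  have hsplit : (fun j => g j (ε j)) = fun j =>
      (if ε j then (Polynomial.X : Polynomial (MvPolynomial (Fin n) (ZMod p))) ^ p ^ e j else 1) •
        (fun i => Polynomial.C
          ((X i : MvPolynomial (Fin n) (ZMod p)) ^ p ^ (e j + if ε j then 1 else 0))) := by
    funext j
    funext i
    cases h : ε j <;> simp [hg, h, mul_comm]
  rw [hsplit, MultilinearMap.map_smul_univ]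
  have hprod : (∏ j, if ε j then
      (Polynomial.X : Polynomial (MvPolynomial (Fin n) (ZMod p))) ^ p ^ e j else 1) =
      Polynomial.X ^ (∑ j, if ε j then p ^ e j else 0) := by
    rw [← Finset.prod_pow_eq_pow_sum]
    apply Finset.prod_congr rfl
    intro j _
    cases h : ε j <;> simp [h]
  have hdet : (Matrix.detRowAlternating :
      (Fin n → Polynomial (MvPolynomial (Fin n) (ZMod p)))
        [⋀^Fin n]→ₗ[Polynomial (MvPolynomial (Fin n) (ZMod p))]
        Polynomial (MvPolynomial (Fin n) (ZMod p))).toMultilinearMap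
      (fun j i => Polynomial.C
        ((X i : MvPolynomial (Fin n) (ZMod p)) ^ p ^ (e j + if ε j then 1 else 0))) =
      Polynomial.C (br p fun j => e j + if ε j then 1 else 0) := by
    have h1 : (fun (j i : Fin n) => Polynomial.C
        ((X i : MvPolynomial (Fin n) (ZMod p)) ^ p ^ (e j + if ε j then 1 else 0))) =
        ((Matrix.of fun i j : Fin n => (X i : MvPolynomial (Fin n) (ZMod p)) ^
          p ^ (e j + if ε j then 1 else 0)).map (Polynomial.C)).transpose := by
      ext j i
      simp [Matrix.transpose_apply, Matrix.map_apply]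
    show Matrix.det _ = _
    rw [h1, Matrix.det_transpose, ← RingHom.mapMatrix_apply, ← RingHom.map_det]
    rfl
  rw [hdet, hprod, smul_eq_mul, mul_comm, Polynomial.C_mul_X_pow_eq_monomial]

/-- For pairwise distinct exponents `e_1,…,e_n` and `r ≥ 0`:
`P^r[e_1,…,e_n] = [e_1+ε_1,…,e_n+ε_n]` if `r = Σ_j ε_j p^{e_j}` with `ε_j ∈ {0,1}`
(such a representation being unique), and `P^r[e_1,…,e_n] = 0` otherwise. -/
theorem stmt19 (p n : ℕ) (hp : p.Prime) (hodd : Odd p) (e : Fin n → ℕ)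
    (he : Function.Injective e) (r : ℕ) :
    (∀ ε ε' : Fin n → Bool,
      r = (∑ j, if ε j then p ^ e j else 0) → r = (∑ j, if ε' j then p ^ e j else 0) →
        ε = ε') ∧
    (∀ ε : Fin n → Bool, r = (∑ j, if ε j then p ^ e j else 0) →
      (Pt p n (br p e)).coeff r = br p (fun j => e j + if ε j then 1 else 0)) ∧
    ((¬ ∃ ε : Fin n → Bool, r = (∑ j, if ε j then p ^ e j else 0)) →
      (Pt p n (br p e)).coeff r = 0) := by
  classical
  haveI : Fact p.Prime := ⟨hp⟩
  have hp2 : 2 ≤ p := hp.two_le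
  have hsum : ∀ ε : Fin n → Bool, (∑ j, if ε j then p ^ e j else 0)
      = ∑ k ∈ (univ.filter fun j => ε j = true).image e, p ^ k := by
    intro ε
    rw [Finset.sum_image (fun a _ b _ h => he h), Finset.sum_filter]
  have hinj : ∀ ε ε' : Fin n → Bool,
      (∑ j, if ε j then p ^ e j else 0) = (∑ j, if ε' j then p ^ e j else 0) → ε = ε' := by
    intro ε ε' h
    rw [hsum, hsum] at h
    have himg := sum_pow_injective hp2 h
    have hfil : (univ.filter fun j => ε j = true) = (univ.filter fun j => ε' j = true) :=
      Finset.image_injective he himg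
    funext j
    have hj := Finset.ext_iff.1 hfil j
    simp only [Finset.mem_filter, Finset.mem_univ, true_and] at hj
    cases h1 : ε j <;> cases h2 : ε' j <;> simp_all
  have hcoeff : (Pt p n (br p e)).coeff r =
      ∑ ε : Fin n → Bool, if (∑ j, if ε j then p ^ e j else 0) = r
        then br p (fun j => e j + if ε j then 1 else 0) else 0 := by
    rw [Pt_br, Polynomial.finset_sum_coeff]
    apply Finset.sum_congr rfl
    intro ε _
    rw [Polynomial.coeff_monomial]
  refine ⟨fun ε ε' h1 h2 => hinj ε ε' (h1 ▸ h2.symm ▸ rfl), ?_, ?_⟩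
  · intro ε hε
    rw [hcoeff, Finset.sum_eq_single ε]
    · rw [if_pos hε.symm]
    · intro ε' _ hne
      rw [if_neg]
      intro h
      exact hne (hinj ε' ε (h.trans hε))
    · intro h
      exact absurd (Finset.mem_univ ε) h
  · intro hno
    rw [hcoeff]
    apply Finset.sum_eq_zero
    intro ε _
    rw [if_neg]
    intro h
    exact hno ⟨ε, h.symm⟩
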